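/- Let H be an enumerated K₄-free graph and X₀, X₁ types of H on the same level ℓ such that there exists i < ℓ with t adjacent to i in both X₀ and X₁. Then no graph in Age_H(X₀, X₁) contains a triangle using vertices of both labels. -/

import Mathlib

/-- Auxiliary relation defining the graph G ⊕ (X₀,…,X_{n−1}): on an n-labeled graph `G`
with labelling `χ`, extended by the vertices 0,…,ℓ−1 of the enumerated graph `H`, where
the type `X_c` on level ℓ has neighbourhood `nbr c` of its type vertex t. -/
def oplusRel {V : Type} (G : SimpleGraph V) {n : ℕ} (χ : V → Fin n)
    (H : SimpleGraph ℕ) (ℓ : ℕ) (nbr : Fin n → Set ℕ) :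
    (V ⊕ Fin ℓ) → (V ⊕ Fin ℓ) → Prop
  | Sum.inl a, Sum.inl b => G.Adj a b
  | Sum.inl a, Sum.inr i => (i : ℕ) ∈ nbr (χ a)
  | Sum.inr i, Sum.inr j => H.Adj (i : ℕ) (j : ℕ)
  | Sum.inr _, Sum.inl _ => False

/-- The graph G ⊕ (X₀,…,X_{n−1}) on vertex set V ⊕ Fin ℓ. -/
def oplus {V : Type} (G : SimpleGraph V) {n : ℕ} (χ : V → Fin n)
    (H : SimpleGraph ℕ) (ℓ : ℕ) (nbr : Fin n → Set ℕ) : SimpleGraph (V ⊕ Fin ℓ) :=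
  SimpleGraph.fromRel (oplusRel G χ H ℓ nbr)

/-- G ∈ Age_H(X₀,…,X_{n−1}): the graph G ⊕ (X₀,…,X_{n−1}) embeds into H. -/
def AgeMem {V : Type} [Fintype V] (G : SimpleGraph V) {n : ℕ} (χ : V → Fin n)
    (H : SimpleGraph ℕ) (ℓ : ℕ) (nbr : Fin n → Set ℕ) : Prop :=
  Nonempty ((oplus G χ H ℓ nbr) ↪g H)

/-- let H be an enumerated K₄-free graph and X₀, X₁ types of H on the same
level ℓ such that t is adjacent to some i < ℓ in both X₀ and X₁. Then no graph in
Age_H(X₀, X₁) contains a triangle using vertices of both labels (every triangle is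
monochromatic). -/
theorem age_no_bichromatic_triangle (H : SimpleGraph ℕ) (hH : H.CliqueFree 4)
    (ℓ : ℕ) (nbr : Fin 2 → Set ℕ) (hsub : ∀ c, nbr c ⊆ Set.Iio ℓ)
    (i : ℕ) (hiℓ : i < ℓ) (hi0 : i ∈ nbr 0) (hi1 : i ∈ nbr 1)
    {V : Type} [Fintype V] (G : SimpleGraph V) (χ : V → Fin 2)
    (hAge : AgeMem G χ H ℓ nbr) :
    ∀ u v w : V, G.Adj u v → G.Adj u w → G.Adj v w → χ u = χ v ∧ χ u = χ w := by

  intro u v w huv huw hvw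
  obtain ⟨f⟩ := hAge
  exfalso
  set O := oplus G χ H ℓ nbr with hO
  have hadj : ∀ a b : V ⊕ Fin ℓ, a ≠ b → oplusRel G χ H ℓ nbr a b → O.Adj a b := by
    intro a b hne hr
    exact ⟨hne, Or.inl hr⟩
  have hi : ∀ a : V, O.Adj (Sum.inl a) (Sum.inr ⟨i, hiℓ⟩) := by
    intro a
    apply hadj _ _ (by simp)
    show i ∈ nbr (χ a)
    have h2 : χ a = 0 ∨ χ a = 1 := by omega
    rcases h2 with h|h <;> rw [h] <;> assumption
  have huv' : O.Adj (Sum.inl u) (Sum.inl v) := hadj _ _ (by simp [huv.ne]) huv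
  have huw' : O.Adj (Sum.inl u) (Sum.inl w) := hadj _ _ (by simp [huw.ne]) huw
  have hvw' : O.Adj (Sum.inl v) (Sum.inl w) := hadj _ _ (by simp [hvw.ne]) hvw
  classical
  have hOfree : O.CliqueFree 4 := SimpleGraph.CliqueFree.comap f.isContained hH
  apply hOfree ({Sum.inl u, Sum.inl v, Sum.inl w, Sum.inr ⟨i, hiℓ⟩} : Finset (V ⊕ Fin ℓ))
  constructor
  · intro x hx y hy hxy
    simp only [Finset.coe_insert, Set.mem_insert_iff, Finset.coe_singleton,
      Set.mem_singleton_iff] at hx hy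
    rcases hx with rfl|rfl|rfl|rfl <;> rcases hy with rfl|rfl|rfl|rfl <;>
      first
        | exact absurd rfl hxy
        | assumption
        | exact huv'.symm
        | exact huw'.symm
        | exact hvw'.symm
        | exact hi u
        | exact hi v
        | exact hi w
        | exact (hi u).symm
        | exact (hi v).symm
        | exact (hi w).symm
  · rw [Finset.card_insert_of_notMem (by simp [huv.ne, huw.ne]),
      Finset.card_insert_of_notMem (by simp [hvw.ne]),
      Finset.card_insert_of_notMem (by simp), Finset.card_singleton]
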